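/- For finite graphs G and H, the fractional chromatic number of the OR-product satisfies χ_f(G * H) = χ_f(G) · χ_f(H); in particular χ_f(G^n) = χ_f(G)^n for the n-th OR-power. -/

import Mathlib

def IsBFoldColoring {V : Type*} (G : SimpleGraph V) (a b : ℕ)
    (c : V → Finset (Fin a)) : Prop :=
  (∀ v, (c v).card = b) ∧ ∀ v w, G.Adj v w → Disjoint (c v) (c w)

def HasFoldColoring {V : Type*} (G : SimpleGraph V) (a b : ℕ) : Prop :=
  ∃ c : V → Finset (Fin a), IsBFoldColoring G a b c

/-- The `b`-fold chromatic number `χ_b(G)`. -/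
noncomputable def foldChromatic {V : Type*} (G : SimpleGraph V) (b : ℕ) : ℕ :=
  sInf {a | HasFoldColoring G a b}

/-- The fractional chromatic number `χ_f(G) = inf_b χ_b(G)/b`. -/
noncomputable def fracChromatic {V : Type*} (G : SimpleGraph V) : ℝ :=
  ⨅ b : ℕ+, (foldChromatic G (b : ℕ) : ℝ) / ((b : ℕ) : ℝ)
/-- The OR-product (co-normal product) of two simple graphs. -/
def orProd {α β : Type*} (G : SimpleGraph α) (H : SimpleGraph β) :
    SimpleGraph (α × β) where
  Adj x y := G.Adj x.1 y.1 ∨ H.Adj x.2 y.2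
  symm := by
    constructor
    intro x y h
    cases h with
    | inl h => exact Or.inl h.symm
    | inr h => exact Or.inr h.symm
  loopless := by
    constructor
    intro x h
    cases h with
    | inl h => exact G.irrefl h
    | inr h => exact H.irrefl h
/-- The n-th OR-power of a simple graph: tuples are adjacent iff at least one
coordinate pair is adjacent. -/
def orPow {V : Type*} (G : SimpleGraph V) (n : ℕ) : SimpleGraph (Fin n → V) where
  Adj x y := ∃ i, G.Adj (x i) (y i)
  symm := by
    constructor
    intro x y ⟨i, h⟩
    exact ⟨i, h.symm⟩
  loopless := by
    constructor
    intro x ⟨i, h⟩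
    exact G.irrefl h

open Finset
open scoped Classical
open scoped Pointwise

section Aux

variable {α β : Type*}

/-- independent (stable) set -/
def Indep {α : Type*} (G : SimpleGraph α) (s : Finset α) : Prop :=
  ∀ ⦃v⦄, v ∈ s → ∀ ⦃w⦄, w ∈ s → ¬ G.Adj v w

def FracClique {α : Type*} [Fintype α] (G : SimpleGraph α) (w : α → ℝ) : Prop :=
  (∀ v, 0 ≤ w v) ∧ ∀ s : Finset α, Indep G s → ∑ v ∈ s, w v ≤ 1

variable {α β : Type*}

/-- every graph has some fold coloring -/
lemma hasFold_mul_card [Fintype α] (G : SimpleGraph α) (b : ℕ) :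
    HasFoldColoring G (Fintype.card α * b) b := by
  classical
  set e := Fintype.equivFin α with he
  have hbd : ∀ (v : α) (i : Fin b), (e v : ℕ) * b + (i : ℕ) < Fintype.card α * b := by
    intro v i
    calc (e v : ℕ) * b + (i : ℕ) < (e v : ℕ) * b + b := by omega
    _ = ((e v : ℕ) + 1) * b := by ring
    _ ≤ Fintype.card α * b := Nat.mul_le_mul_right _ (e v).2
  refine ⟨fun v => (univ : Finset (Fin b)).map
    ⟨fun i : Fin b => (⟨(e v : ℕ) * b + (i : ℕ), hbd v i⟩ : Fin (Fintype.card α * b)), ?_⟩,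
    fun v => by rw [Finset.card_map, Finset.card_univ, Fintype.card_fin], ?_⟩
  · intro i j hij
    have := congrArg Fin.val hij
    simp only [Fin.ext_iff] at this ⊢
    omega
  · intro v u hadj
    rw [Finset.disjoint_left]
    rintro x hx1 hx2
    obtain ⟨i, -, hi⟩ := Finset.mem_map.mp hx1
    obtain ⟨j, -, hj⟩ := Finset.mem_map.mp hx2
    have hb : 0 < b := i.pos
    have : (e v : ℕ) * b + (i : ℕ) = (e u : ℕ) * b + (j : ℕ) := by
      have h := congrArg Fin.val (hi.trans hj.symm)
      exact h
    have hev : (e v : ℕ) = (e u : ℕ) := by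
      have h1 : ((e v : ℕ) * b + (i : ℕ)) / b = (e v : ℕ) := by
        rw [Nat.mul_comm, Nat.mul_add_div hb, Nat.div_eq_of_lt i.2, Nat.add_zero]
      have h2 : ((e u : ℕ) * b + (j : ℕ)) / b = (e u : ℕ) := by
        rw [Nat.mul_comm, Nat.mul_add_div hb, Nat.div_eq_of_lt j.2, Nat.add_zero]
      rw [← h1, this, h2]
    have : v = u := e.injective (Fin.ext hev)
    exact G.loopless.irrefl v (this ▸ hadj)

lemma foldSet_nonempty [Fintype α] (G : SimpleGraph α) (b : ℕ) :
    {a | HasFoldColoring G a b}.Nonempty := ⟨_, hasFold_mul_card G b⟩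

lemma hasFold_foldChromatic [Fintype α] (G : SimpleGraph α) (b : ℕ) :
    HasFoldColoring G (foldChromatic G b) b :=
  Nat.sInf_mem (foldSet_nonempty G b)

/-- weak duality : a fractional clique bounds any fold coloring from below -/
lemma clique_le_fold [Fintype α] {G : SimpleGraph α} {w : α → ℝ}
    (hw : FracClique G w) {a b : ℕ} (h : HasFoldColoring G a b) :
    (b : ℝ) * ∑ v, w v ≤ a := by
  classical
  obtain ⟨c, hcard, hadj⟩ := h
  have key : ∀ i : Fin a, ∑ v ∈ univ.filter (fun v => i ∈ c v), w v ≤ 1 := by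
    intro i
    apply hw.2
    intro v hv u hu hvu
    have dv := hadj v u hvu
    rw [Finset.mem_filter] at hv hu
    exact Finset.disjoint_left.mp dv hv.2 hu.2
  calc (b : ℝ) * ∑ v, w v = ∑ v, (c v).card * w v := by
        rw [Finset.mul_sum]; exact Finset.sum_congr rfl fun v _ => by rw [hcard v]
    _ = ∑ v : α, ∑ i : Fin a, if i ∈ c v then w v else 0 := by
        refine Finset.sum_congr rfl fun v _ => ?_
        rw [Finset.sum_ite_mem, Finset.univ_inter, Finset.sum_const, nsmul_eq_mul]
    _ = ∑ i : Fin a, ∑ v ∈ univ.filter (fun v => i ∈ c v), w v := by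
        rw [Finset.sum_comm]
        exact Finset.sum_congr rfl fun i _ => (Finset.sum_filter _ _).symm
    _ ≤ ∑ _i : Fin a, (1 : ℝ) := Finset.sum_le_sum fun i _ => key i
    _ = a := by simp

lemma fracChromatic_bddBelow [Fintype α] (G : SimpleGraph α) :
    BddBelow (Set.range fun b : ℕ+ => (foldChromatic G (b : ℕ) : ℝ) / ((b : ℕ) : ℝ)) := by
  refine ⟨0, ?_⟩
  rintro x ⟨b, rfl⟩
  positivity

lemma fracChromatic_nonneg [Fintype α] (G : SimpleGraph α) : 0 ≤ fracChromatic G :=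
  le_ciInf fun b => by positivity

/-- weak duality at the level of fracChromatic -/
lemma clique_le_frac [Fintype α] {G : SimpleGraph α} {w : α → ℝ}
    (hw : FracClique G w) : ∑ v, w v ≤ fracChromatic G := by
  refine le_ciInf fun b => ?_
  have h := clique_le_fold hw (hasFold_foldChromatic G (b : ℕ))
  have hb : (0 : ℝ) < ((b : ℕ) : ℝ) := by exact_mod_cast b.pos
  rw [le_div_iff₀ hb, mul_comm]
  exact h

lemma indep_empty (G : SimpleGraph α) : Indep G (∅ : Finset α) := by
  intro v hv; simp at hv

lemma indep_singleton (G : SimpleGraph α) (v : α) : Indep G ({v} : Finset α) := by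
  intro x hx y hy
  rw [Finset.mem_singleton] at hx hy
  subst hx; subst hy
  exact G.loopless.irrefl _

lemma fracClique_zero [Fintype α] (G : SimpleGraph α) : FracClique G (0 : α → ℝ) :=
  ⟨fun _ => le_rfl, fun s _ => by simp⟩

/-- existence of a maximum fractional clique -/
lemma exists_max_clique [Fintype α] (G : SimpleGraph α) :
    ∃ w : α → ℝ, FracClique G w ∧ ∀ w', FracClique G w' → ∑ v, w' v ≤ ∑ v, w v := by
  classical
  set K := {w : α → ℝ | FracClique G w} with hK
  have hclosed : IsClosed K := by
    have : K = (⋂ v : α, {w : α → ℝ | 0 ≤ w v}) ∩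
        ⋂ (s : Finset α) (_ : Indep G s), {w : α → ℝ | ∑ v ∈ s, w v ≤ 1} := by
      ext w
      simp only [hK, Set.mem_setOf_eq, Set.mem_inter_iff, Set.mem_iInter, FracClique]
      try tauto
    rw [this]
    refine IsClosed.inter (isClosed_iInter fun v => ?_)
      (isClosed_iInter fun s => isClosed_iInter fun _ => ?_)
    · exact isClosed_le continuous_const (continuous_apply v)
    · exact isClosed_le (continuous_finset_sum s fun v _ => continuous_apply v) continuous_const
  have hsub : K ⊆ Set.pi Set.univ fun _ : α => Set.Icc (0 : ℝ) 1 := by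
    intro w hw v _
    refine ⟨hw.1 v, ?_⟩
    have := hw.2 {v} (indep_singleton G v)
    simpa using this
  have hcomp : IsCompact K :=
    IsCompact.of_isClosed_subset (isCompact_univ_pi fun _ => isCompact_Icc) hclosed hsub
  obtain ⟨w, hwK, hmax⟩ := hcomp.exists_isMaxOn ⟨0, fracClique_zero G⟩
    (continuous_finset_sum univ fun v _ => continuous_apply v).continuousOn
  exact ⟨w, hwK, fun w' hw' => hmax hw'⟩

/-- Separation step: if every fractional clique has value `< t`, there is a
real fractional coloring of total weight `t`. -/
lemma exists_real_coloring [Fintype α] (G : SimpleGraph α) {t : ℝ} (ht : 0 < t)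
    (hmax : ∀ w, FracClique G w → ∑ v, w v < t) :
    ∃ lam : Finset α → ℝ, (∀ s, 0 ≤ lam s) ∧ (∀ s, ¬ Indep G s → lam s = 0) ∧
      (∑ s, lam s) = t ∧
      ∀ v, 1 ≤ ∑ s ∈ univ.filter (fun s => v ∈ s), lam s := by
  classical
  set m : (Finset α → ℝ) → (α → ℝ) :=
    fun lam v => ∑ s ∈ univ.filter (fun s => v ∈ s), lam s with hm
  set Δ : Set (Finset α → ℝ) :=
    {lam | (∀ s, 0 ≤ lam s) ∧ (∀ s, ¬ Indep G s → lam s = 0) ∧ ∑ s, lam s = t} with hΔ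
  set A : Set (α → ℝ) := {x | ∃ lam ∈ Δ, ∀ v, x v ≤ m lam v} with hA
  by_cases hone : (fun _ : α => (1 : ℝ)) ∈ A
  · obtain ⟨lam, hlam, hcov⟩ := hone
    exact ⟨lam, hlam.1, hlam.2.1, hlam.2.2, hcov⟩
  exfalso
  -- the delta measures
  have hdelta : ∀ s₀ : Finset α, Indep G s₀ →
      (fun s => if s = s₀ then t else 0) ∈ Δ := by
    intro s₀ hs₀
    refine ⟨fun s => by positivity, fun s hs => ?_, by simp⟩
    have : s ≠ s₀ := fun h => hs (h ▸ hs₀)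
    simp [this]
  have hmdelta : ∀ (s₀ : Finset α) (v : α),
      m (fun s => if s = s₀ then t else 0) v = if v ∈ s₀ then t else 0 := by
    intro s₀ v
    simp only [hm]
    rw [Finset.sum_ite_eq' (univ.filter (fun s => v ∈ s)) s₀ (fun _ => t)]
    simp
  -- A is convex
  have hconv : Convex ℝ A := by
    rintro x hx y hy a b ha hb hab
    obtain ⟨l1, hl1, hc1⟩ := hx
    obtain ⟨l2, hl2, hc2⟩ := hy
    refine ⟨a • l1 + b • l2, ⟨fun s => by
        have := hl1.1 s; have := hl2.1 s
        simp only [Pi.add_apply, Pi.smul_apply, smul_eq_mul]; positivity,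
      fun s hs => by
        simp only [Pi.add_apply, Pi.smul_apply, smul_eq_mul, hl1.2.1 s hs, hl2.2.1 s hs]
        ring, by
        simp only [Pi.add_apply, Pi.smul_apply, smul_eq_mul]
        rw [Finset.sum_add_distrib, ← Finset.mul_sum, ← Finset.mul_sum,
          hl1.2.2, hl2.2.2]
        nlinarith⟩, fun v => ?_⟩
    have hmv : m (a • l1 + b • l2) v = a * m l1 v + b * m l2 v := by
      simp only [hm, Pi.add_apply, Pi.smul_apply, smul_eq_mul]
      rw [Finset.sum_add_distrib, ← Finset.mul_sum, ← Finset.mul_sum]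
    rw [hmv]
    have h1 := hc1 v; have h2 := hc2 v
    simp only [Pi.add_apply, Pi.smul_apply, smul_eq_mul]
    nlinarith
  -- A is closed
  have hΔcomp : IsCompact Δ := by
    have hclosed : IsClosed Δ := by
      have : Δ = (⋂ s : Finset α, {lam : Finset α → ℝ | 0 ≤ lam s}) ∩
          ((⋂ (s : Finset α) (_ : ¬ Indep G s), {lam : Finset α → ℝ | lam s = 0}) ∩
           {lam : Finset α → ℝ | ∑ s, lam s = t}) := by
        ext lam
        simp only [hΔ, Set.mem_setOf_eq, Set.mem_inter_iff, Set.mem_iInter]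
        try tauto
      rw [this]
      refine IsClosed.inter (isClosed_iInter fun s => ?_)
        (IsClosed.inter (isClosed_iInter fun s => isClosed_iInter fun _ => ?_) ?_)
      · exact isClosed_le continuous_const (continuous_apply s)
      · exact isClosed_eq (continuous_apply s) continuous_const
      · exact isClosed_eq (continuous_finset_sum univ fun s _ => continuous_apply s)
          continuous_const
    refine IsCompact.of_isClosed_subset
      (isCompact_univ_pi fun _ : Finset α => isCompact_Icc (a := (0:ℝ)) (b := t))
      hclosed ?_
    intro lam hlam s _
    refine ⟨hlam.1 s, ?_⟩
    calc lam s ≤ ∑ s', lam s' :=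
          Finset.single_le_sum (fun s' _ => hlam.1 s') (Finset.mem_univ s)
      _ = t := hlam.2.2
  have hmcont : Continuous m := by
    refine continuous_pi fun v => ?_
    exact continuous_finset_sum _ fun s _ => continuous_apply s
  have hOclosed : IsClosed {y : α → ℝ | ∀ v, y v ≤ 0} := by
    have : {y : α → ℝ | ∀ v, y v ≤ 0} = ⋂ v : α, {y : α → ℝ | y v ≤ 0} := by
      ext y; simp
    rw [this]
    exact isClosed_iInter fun v => isClosed_le (continuous_apply v) continuous_const
  have hAeq : A = (m '' Δ) + {y : α → ℝ | ∀ v, y v ≤ 0} := by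
    ext x
    constructor
    · rintro ⟨lam, hlam, hcov⟩
      exact ⟨m lam, ⟨lam, hlam, rfl⟩, x - m lam,
        fun v => by simpa using hcov v, by simp⟩
    · rintro ⟨c, ⟨lam, hlam, rfl⟩, y, hy, rfl⟩
      exact ⟨lam, hlam, fun v => by simpa using hy v⟩
  have hAclosed : IsClosed A := by
    rw [hAeq]
    exact IsClosed.add_left_of_isCompact hOclosed (hΔcomp.image hmcont)
  -- separate
  obtain ⟨f, u, hfA, hfone⟩ := geometric_hahn_banach_closed_point hconv hAclosed hone
  set w : α → ℝ := fun v => f (fun j => if v = j then 1 else 0) with hw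
  have hfx : ∀ x : α → ℝ, f x = ∑ v, x v * w v := by
    intro x
    conv_lhs => rw [pi_eq_sum_univ x]
    rw [map_sum]
    exact Finset.sum_congr rfl fun v _ => by rw [f.map_smul, smul_eq_mul, hw]
  -- 0 ∈ A hence u > 0
  have hzeroA : (fun _ : α => (0 : ℝ)) ∈ A := by
    refine ⟨fun s => if s = (∅ : Finset α) then t else 0,
      hdelta ∅ (indep_empty G), fun v => ?_⟩
    rw [hmdelta]
    simp
  have hu : 0 < u := by
    have := hfA _ hzeroA
    have h0 : f (fun _ : α => (0 : ℝ)) = 0 := by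
      rw [hfx]; simp
    linarith
  -- w is nonnegative
  have hwnn : ∀ v, 0 ≤ w v := by
    intro v₀
    by_contra hneg
    push_neg at hneg
    set r : ℝ := (u + 1) / (-w v₀) with hr
    have hrpos : 0 < r := by
      apply div_pos <;> linarith
    have hxA : (fun j => if v₀ = j then -r else 0) ∈ A := by
      refine ⟨fun s => if s = (∅ : Finset α) then t else 0,
        hdelta ∅ (indep_empty G), fun v => ?_⟩
      rw [hmdelta]
      simp only [Finset.notMem_empty, if_false]
      split <;> linarith
    have hfr := hfA _ hxA
    have : f (fun j => if v₀ = j then -r else 0) = -r * w v₀ := by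
      rw [hfx]
      rw [Finset.sum_congr rfl (fun v _ => by
        rw [ite_mul, zero_mul] : ∀ v ∈ univ,
          (if v₀ = v then -r else 0) * w v = if v₀ = v then -r * w v else 0)]
      rw [Finset.sum_ite_eq univ v₀ (fun v => -r * w v)]
      simp
    rw [this] at hfr
    have : r * (-w v₀) = u + 1 := by
      have hne : w v₀ ≠ 0 := ne_of_lt hneg
      rw [hr]
      field_simp
    nlinarith
  -- clique sums are < u/t
  have hsind : ∀ s₀ : Finset α, Indep G s₀ → t * ∑ v ∈ s₀, w v < u := by
    intro s₀ hs₀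
    have hxA : m (fun s => if s = s₀ then t else 0) ∈ A :=
      ⟨_, hdelta s₀ hs₀, fun v => le_rfl⟩
    have hfr := hfA _ hxA
    have : f (m (fun s => if s = s₀ then t else 0)) = t * ∑ v ∈ s₀, w v := by
      rw [hfx]
      rw [Finset.sum_congr rfl (fun v _ => by rw [hmdelta, ite_mul, zero_mul] : ∀ v ∈ univ,
        m (fun s => if s = s₀ then t else 0) v * w v = if v ∈ s₀ then t * w v else 0)]
      rw [← Finset.sum_filter, Finset.mul_sum]
      refine Finset.sum_congr ?_ fun v _ => rfl
      ext v; simp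
    linarith [this ▸ hfr]
  have hfone' : u < ∑ v, w v := by
    have : f (fun _ : α => (1 : ℝ)) = ∑ v, w v := by rw [hfx]; simp
    linarith [this ▸ hfone]
  -- build the contradicting fractional clique
  have hclique : FracClique G (fun v => (t / u) * w v) := by
    constructor
    · intro v
      have := hwnn v
      positivity
    · intro s hs
      rw [← Finset.mul_sum]
      have h1 := hsind s hs
      rw [div_mul_eq_mul_div, div_le_one hu]
      nlinarith
  have hval := hmax _ hclique
  rw [← Finset.mul_sum] at hval
  have : t / u * ∑ v, w v > t := by
    rw [div_mul_eq_mul_div, gt_iff_lt, lt_div_iff₀ hu]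
    nlinarith
  linarith

/-- transport a fold coloring along an equivalence of colors -/
lemma hasFold_of_finset [Fintype α] {G : SimpleGraph α} {C : Type*} [Fintype C]
    {a b : ℕ} (e : C ≃ Fin a) (c : α → Finset C)
    (hcard : ∀ v, (c v).card = b)
    (hadj : ∀ v w, G.Adj v w → Disjoint (c v) (c w)) :
    HasFoldColoring G a b := by
  refine ⟨fun v => (c v).map e.toEmbedding, fun v => by simp [hcard v], ?_⟩
  intro v w h
  have := hadj v w h
  rwa [Finset.disjoint_map]

/-- from integer weights on independent sets to a fold coloring -/
lemma hasFold_of_weights [Fintype α] {G : SimpleGraph α} (p : Finset α → ℕ)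
    (hsupp : ∀ s, p s ≠ 0 → Indep G s) {b : ℕ}
    (hcov : ∀ v, b ≤ ∑ s ∈ univ.filter (fun s => v ∈ s), p s) :
    HasFoldColoring G (∑ s, p s) b := by
  classical
  set C := (s : Finset α) × Fin (p s) with hC
  have hcardC : Fintype.card C = ∑ s, p s := by
    simp [hC, Fintype.card_sigma]
  set e : C ≃ Fin (∑ s, p s) := Fintype.equivFinOfCardEq hcardC with he
  -- the available colors for each vertex
  have hScard : ∀ v : α, b ≤ (univ.filter (fun x : C => v ∈ x.1)).card := by
    intro v
    refine le_trans (hcov v) ?_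
    rw [Finset.card_filter]
    rw [← Finset.univ_sigma_univ, Finset.sum_sigma]
    rw [Finset.sum_filter]
    apply le_of_eq
    refine Finset.sum_congr rfl fun s _ => ?_
    by_cases hv : v ∈ s <;> simp [hv]
  choose T hTsub hTcard using fun v => Finset.exists_subset_card_eq (hScard v)
  refine hasFold_of_finset e T hTcard ?_
  intro v w hadj
  rw [Finset.disjoint_left]
  intro x hxv hxw
  have h1 := hTsub v hxv
  have h2 := hTsub w hxw
  rw [Finset.mem_filter] at h1 h2
  have hps : p x.1 ≠ 0 := by
    have := x.2
    intro h
    rw [h] at this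
    exact this.elim0
  exact hsupp x.1 hps h1.2 h2.2 hadj

lemma frac_le_max [Fintype α] (G : SimpleGraph α) {M : ℝ}
    (hM : 0 ≤ M) (hmax : ∀ w', FracClique G w' → ∑ v, w' v ≤ M) :
    fracChromatic G ≤ M := by
  classical
  refine le_of_forall_pos_le_add fun ε hε => ?_
  set t : ℝ := M + ε / 2 with htdef
  have ht : 0 < t := by positivity
  have hmaxlt : ∀ w, FracClique G w → ∑ v, w v < t := fun w hw => by
    have := hmax w hw; simp only [htdef]; linarith
  obtain ⟨lam, hnn, hsupp0, hsum, hcov⟩ := exists_real_coloring G ht hmaxlt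
  set N : ℕ := Fintype.card (Finset α) with hN
  obtain ⟨n₀, hn₀⟩ := exists_nat_gt ((N : ℝ) / (ε / 2))
  set b : ℕ+ := ⟨n₀ + 1, Nat.succ_pos _⟩ with hbdef
  have hbR : ((N : ℝ) / (ε / 2)) < ((b : ℕ) : ℝ) := by
    refine lt_of_lt_of_le hn₀ ?_
    exact_mod_cast Nat.le_succ n₀
  have hbpos : (0 : ℝ) < ((b : ℕ) : ℝ) := by exact_mod_cast b.pos
  set p : Finset α → ℕ := fun s => ⌈lam s * ((b : ℕ) : ℝ)⌉₊ with hp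
  have hsupp : ∀ s, p s ≠ 0 → Indep G s := by
    intro s hps
    by_contra hind
    rw [hp] at hps
    simp [hsupp0 s hind] at hps
  have hcovp : ∀ v, (b : ℕ) ≤ ∑ s ∈ univ.filter (fun s => v ∈ s), p s := by
    intro v
    have : ((b : ℕ) : ℝ) ≤ ((∑ s ∈ univ.filter (fun s => v ∈ s), p s : ℕ) : ℝ) := by
      push_cast
      calc ((b : ℕ) : ℝ) = ((b : ℕ) : ℝ) * 1 := by ring
        _ ≤ ((b : ℕ) : ℝ) * ∑ s ∈ univ.filter (fun s => v ∈ s), lam s := by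
            have := hcov v
            nlinarith
        _ = ∑ s ∈ univ.filter (fun s => v ∈ s), lam s * ((b : ℕ) : ℝ) := by
            rw [Finset.mul_sum]; exact Finset.sum_congr rfl fun s _ => by ring
        _ ≤ ∑ s ∈ univ.filter (fun s => v ∈ s), ((p s : ℕ) : ℝ) :=
            Finset.sum_le_sum fun s _ => Nat.le_ceil _
    exact_mod_cast this
  have hfold := hasFold_of_weights p hsupp hcovp
  have hχ : foldChromatic G (b : ℕ) ≤ ∑ s, p s := Nat.sInf_le hfold
  have ha : ((∑ s, p s : ℕ) : ℝ) ≤ t * ((b : ℕ) : ℝ) + N := by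
    push_cast
    calc ∑ s, ((p s : ℕ) : ℝ) ≤ ∑ s : Finset α, (lam s * ((b : ℕ) : ℝ) + 1) := by
          refine Finset.sum_le_sum fun s _ => ?_
          have h1 : (0 : ℝ) ≤ lam s * ((b : ℕ) : ℝ) := mul_nonneg (hnn s) hbpos.le
          exact le_of_lt (Nat.ceil_lt_add_one h1)
      _ = (∑ s, lam s) * ((b : ℕ) : ℝ) + N := by
          rw [Finset.sum_add_distrib, ← Finset.sum_mul]
          simp [hN, Finset.card_univ]
      _ = t * ((b : ℕ) : ℝ) + N := by rw [hsum]
  have hfle : fracChromatic G ≤ ((foldChromatic G (b : ℕ) : ℕ) : ℝ) / ((b : ℕ) : ℝ) :=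
    ciInf_le (fracChromatic_bddBelow G) b
  calc fracChromatic G ≤ ((foldChromatic G (b : ℕ) : ℕ) : ℝ) / ((b : ℕ) : ℝ) := hfle
    _ ≤ (t * ((b : ℕ) : ℝ) + N) / ((b : ℕ) : ℝ) := by
        refine div_le_div_of_nonneg_right ?_ hbpos.le
        calc ((foldChromatic G (b : ℕ) : ℕ) : ℝ) ≤ ((∑ s, p s : ℕ) : ℝ) := by
              exact_mod_cast hχ
          _ ≤ _ := ha
    _ = t + (N : ℝ) / ((b : ℕ) : ℝ) := by field_simp
    _ ≤ M + ε := by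
        have hN2 : (N : ℝ) / ((b : ℕ) : ℝ) ≤ ε / 2 := by
          rw [div_le_iff₀ hbpos]
          rw [div_lt_iff₀ (by positivity : (0:ℝ) < ε / 2)] at hbR
          nlinarith
        simp only [htdef]
        linarith

/-- Strong LP duality: the fractional chromatic number is attained by a
maximum fractional clique. -/
lemma fracChromatic_eq_max [Fintype α] (G : SimpleGraph α) :
    ∃ w : α → ℝ, FracClique G w ∧ fracChromatic G = ∑ v, w v := by
  obtain ⟨w, hw, hmax⟩ := exists_max_clique G
  have h0 : 0 ≤ ∑ v, w v := by
    have := hmax 0 (fracClique_zero G)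
    simpa using this
  exact ⟨w, hw, le_antisymm (frac_le_max G h0 hmax) (clique_le_frac hw)⟩

/-- product of fractional cliques is a fractional clique of the OR-product -/
lemma fracClique_prod [Fintype α] [Fintype β] {G : SimpleGraph α} {H : SimpleGraph β}
    {wG : α → ℝ} {wH : β → ℝ} (hG : FracClique G wG) (hH : FracClique H wH) :
    FracClique (orProd G H) (fun x : α × β => wG x.1 * wH x.2) := by
  classical
  constructor
  · intro x
    exact mul_nonneg (hG.1 x.1) (hH.1 x.2)
  · intro s hs
    have hsub : s ⊆ (s.image Prod.fst) ×ˢ (s.image Prod.snd) := by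
      intro x hx
      rw [Finset.mem_product]
      exact ⟨Finset.mem_image_of_mem _ hx, Finset.mem_image_of_mem _ hx⟩
    have hfst : Indep G (s.image Prod.fst) := by
      intro g hg g' hg' hadj
      obtain ⟨x, hx, rfl⟩ := Finset.mem_image.mp hg
      obtain ⟨y, hy, rfl⟩ := Finset.mem_image.mp hg'
      exact hs hx hy (Or.inl hadj)
    have hsnd : Indep H (s.image Prod.snd) := by
      intro g hg g' hg' hadj
      obtain ⟨x, hx, rfl⟩ := Finset.mem_image.mp hg
      obtain ⟨y, hy, rfl⟩ := Finset.mem_image.mp hg'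
      exact hs hx hy (Or.inr hadj)
    calc ∑ x ∈ s, wG x.1 * wH x.2
        ≤ ∑ x ∈ (s.image Prod.fst) ×ˢ (s.image Prod.snd), wG x.1 * wH x.2 :=
          Finset.sum_le_sum_of_subset_of_nonneg hsub fun x _ _ =>
            mul_nonneg (hG.1 x.1) (hH.1 x.2)
      _ = (∑ g ∈ s.image Prod.fst, wG g) * (∑ h ∈ s.image Prod.snd, wH h) := by
          rw [Finset.sum_product]
          rw [Finset.sum_mul]
          exact Finset.sum_congr rfl fun g _ => by rw [Finset.mul_sum]
      _ ≤ 1 * 1 := by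
          have h1 := hG.2 _ hfst
          have h2 := hH.2 _ hsnd
          have h1' : 0 ≤ ∑ g ∈ s.image Prod.fst, wG g :=
            Finset.sum_nonneg fun g _ => hG.1 g
          have h2' : 0 ≤ ∑ h ∈ s.image Prod.snd, wH h :=
            Finset.sum_nonneg fun h _ => hH.1 h
          exact mul_le_mul h1 h2 h2' zero_le_one
      _ = 1 := by norm_num

/-- combining fold colorings of factors into one of the OR-product -/
lemma hasFold_orProd [Fintype α] [Fintype β] {G : SimpleGraph α} {H : SimpleGraph β}
    {a1 b1 a2 b2 : ℕ} (h1 : HasFoldColoring G a1 b1) (h2 : HasFoldColoring H a2 b2) :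
    HasFoldColoring (orProd G H) (a1 * a2) (b1 * b2) := by
  classical
  obtain ⟨c1, hc1, hd1⟩ := h1
  obtain ⟨c2, hc2, hd2⟩ := h2
  refine hasFold_of_finset finProdFinEquiv (fun x : α × β => (c1 x.1) ×ˢ (c2 x.2))
    (fun x => by rw [Finset.card_product, hc1, hc2]) ?_
  rintro x y (hadj | hadj) <;> rw [Finset.disjoint_left] <;>
    rintro z hz1 hz2 <;> rw [Finset.mem_product] at hz1 hz2
  · exact Finset.disjoint_left.mp (hd1 _ _ hadj) hz1.1 hz2.1
  · exact Finset.disjoint_left.mp (hd2 _ _ hadj) hz1.2 hz2.2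

lemma fracChromatic_orProd_eq [Fintype α] [Fintype β] (G : SimpleGraph α) (H : SimpleGraph β) :
    fracChromatic (orProd G H) = fracChromatic G * fracChromatic H := by
  obtain ⟨wG, hwG, hGeq⟩ := fracChromatic_eq_max G
  obtain ⟨wH, hwH, hHeq⟩ := fracChromatic_eq_max H
  refine le_antisymm ?_ ?_
  · -- upper bound via product colorings
    refine le_of_forall_pos_le_add fun ε hε => ?_
    have hGnn := fracChromatic_nonneg G
    have hHnn := fracChromatic_nonneg H
    set δ : ℝ := min 1 (ε / (fracChromatic G + fracChromatic H + 1)) with hδdef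
    have hδpos : 0 < δ := lt_min one_pos (by positivity)
    obtain ⟨b1, hb1⟩ := exists_lt_of_ciInf_lt
      (lt_add_of_pos_right (fracChromatic G) hδpos :
        fracChromatic G < fracChromatic G + δ)
    obtain ⟨b2, hb2⟩ := exists_lt_of_ciInf_lt
      (lt_add_of_pos_right (fracChromatic H) hδpos :
        fracChromatic H < fracChromatic H + δ)
    have hfold := hasFold_orProd (hasFold_foldChromatic G (b1 : ℕ))
      (hasFold_foldChromatic H (b2 : ℕ))
    have hχ : foldChromatic (orProd G H) ((b1 * b2 : ℕ+) : ℕ) ≤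
        foldChromatic G (b1 : ℕ) * foldChromatic H (b2 : ℕ) := by
      apply Nat.sInf_le
      simpa using hfold
    have hb1pos : (0:ℝ) < ((b1 : ℕ) : ℝ) := by exact_mod_cast b1.pos
    have hb2pos : (0:ℝ) < ((b2 : ℕ) : ℝ) := by exact_mod_cast b2.pos
    have step1 : fracChromatic (orProd G H) ≤
        ((foldChromatic (orProd G H) ((b1 * b2 : ℕ+) : ℕ) : ℕ) : ℝ) /
          (((b1 * b2 : ℕ+) : ℕ) : ℝ) :=
      ciInf_le (fracChromatic_bddBelow _) (b1 * b2)
    have step2 : ((foldChromatic (orProd G H) ((b1 * b2 : ℕ+) : ℕ) : ℕ) : ℝ) /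
          (((b1 * b2 : ℕ+) : ℕ) : ℝ) ≤
        (((foldChromatic G (b1 : ℕ)) : ℝ) / ((b1 : ℕ) : ℝ)) *
        (((foldChromatic H (b2 : ℕ)) : ℝ) / ((b2 : ℕ) : ℝ)) := by
      rw [div_mul_div_comm]
      have hbb : (((b1 * b2 : ℕ+) : ℕ) : ℝ) = ((b1 : ℕ) : ℝ) * ((b2 : ℕ) : ℝ) := by
        push_cast; ring
      rw [hbb]
      refine div_le_div_of_nonneg_right ?_ (by positivity)
      exact_mod_cast hχ
    have hq1 : (0:ℝ) ≤ ((foldChromatic G (b1 : ℕ)) : ℝ) / ((b1 : ℕ) : ℝ) := by positivity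
    have hq2 : (0:ℝ) ≤ ((foldChromatic H (b2 : ℕ)) : ℝ) / ((b2 : ℕ) : ℝ) := by positivity
    have step3 : (((foldChromatic G (b1 : ℕ)) : ℝ) / ((b1 : ℕ) : ℝ)) *
        (((foldChromatic H (b2 : ℕ)) : ℝ) / ((b2 : ℕ) : ℝ)) ≤
        (fracChromatic G + δ) * (fracChromatic H + δ) := by
      apply mul_le_mul hb1.le hb2.le hq2
      linarith
    have hδ1 : δ ≤ 1 := min_le_left _ _
    have hδ2 : δ * (fracChromatic G + fracChromatic H + 1) ≤ ε := by
      have h := min_le_right 1 (ε / (fracChromatic G + fracChromatic H + 1))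
      rw [← hδdef] at h
      have hpos : (0:ℝ) < fracChromatic G + fracChromatic H + 1 := by positivity
      calc δ * (fracChromatic G + fracChromatic H + 1)
          ≤ (ε / (fracChromatic G + fracChromatic H + 1)) *
            (fracChromatic G + fracChromatic H + 1) := by
            exact mul_le_mul_of_nonneg_right h hpos.le
        _ = ε := by field_simp
    have expand : (fracChromatic G + δ) * (fracChromatic H + δ) ≤
        fracChromatic G * fracChromatic H + ε := by nlinarith
    linarith
  · -- lower bound via the product clique
    have hcl := fracClique_prod hwG hwH
    have := clique_le_frac hcl
    have hsum : ∑ x : α × β, wG x.1 * wH x.2 = (∑ v, wG v) * (∑ v, wH v) := by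
      rw [Fintype.sum_prod_type, Finset.sum_mul]
      exact Finset.sum_congr rfl fun g _ => by rw [Finset.mul_sum]
    rw [hsum] at this
    rw [hGeq, hHeq]
    exact this

/-- fractional chromatic number is invariant under graph isomorphism -/
lemma fracChromatic_eq_of_iso {γ : Type*} (G : SimpleGraph α) (H : SimpleGraph γ)
    (e : α ≃ γ) (he : ∀ x y, G.Adj x y ↔ H.Adj (e x) (e y)) :
    fracChromatic G = fracChromatic H := by
  have key : ∀ a b, HasFoldColoring G a b ↔ HasFoldColoring H a b := by
    intro a b
    constructor
    · rintro ⟨c, hc, hd⟩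
      refine ⟨fun v => c (e.symm v), fun v => hc _, fun v w h => hd _ _ ?_⟩
      rw [he]
      simpa using h
    · rintro ⟨c, hc, hd⟩
      exact ⟨fun v => c (e v), fun v => hc _, fun v w h => hd _ _ ((he v w).mp h)⟩
  have hfold : ∀ b, foldChromatic G b = foldChromatic H b := by
    intro b
    unfold foldChromatic
    congr 1
    ext a
    exact key a b
  unfold fracChromatic
  exact iInf_congr fun b => by rw [hfold]

lemma fracChromatic_orPow_one [Fintype α] (G : SimpleGraph α) :
    fracChromatic (orPow G 1) = fracChromatic G := by
  refine fracChromatic_eq_of_iso _ _ (Equiv.funUnique (Fin 1) α) fun x y => ?_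
  constructor
  · rintro ⟨i, h⟩
    have : i = default := Subsingleton.elim i default
    rw [this] at h
    exact h
  · intro h
    exact ⟨default, h⟩

lemma fracChromatic_orPow_succ [Fintype α] (G : SimpleGraph α) (n : ℕ) :
    fracChromatic (orPow G (n + 1)) = fracChromatic G * fracChromatic (orPow G n) := by
  rw [← fracChromatic_orProd_eq]
  refine fracChromatic_eq_of_iso _ _ (Fin.consEquiv fun _ : Fin (n + 1) => α).symm fun x y => ?_
  show (∃ i, G.Adj (x i) (y i)) ↔ G.Adj (x 0) (y 0) ∨ ∃ i : Fin n, G.Adj (x i.succ) (y i.succ)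
  constructor
  · rintro ⟨i, h⟩
    rcases Fin.eq_zero_or_eq_succ i with rfl | ⟨j, rfl⟩
    · exact Or.inl h
    · exact Or.inr ⟨j, h⟩
  · rintro (h | ⟨i, h⟩)
    · exact ⟨0, h⟩
    · exact ⟨i.succ, h⟩

end Aux

/-- The fractional chromatic number is multiplicative under the OR-product;
in particular `χ_f(G^n) = χ_f(G)^n` for the n-th OR-power. -/
theorem fracChromatic_orProd {α β : Type*} [Fintype α] [Fintype β] :
    (∀ (G : SimpleGraph α) (H : SimpleGraph β),
      fracChromatic (orProd G H) = fracChromatic G * fracChromatic H) ∧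
    (∀ (G : SimpleGraph α) (n : ℕ), 1 ≤ n →
      fracChromatic (orPow G n) = fracChromatic G ^ n) := by
  refine ⟨fun G H => fracChromatic_orProd_eq G H, fun G n hn => ?_⟩
  induction n, hn using Nat.le_induction with
  | base => rw [fracChromatic_orPow_one, pow_one]
  | succ n hn ih => rw [fracChromatic_orPow_succ, ih, pow_succ]; ring
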